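/- For s ≥ 3 the partition p = {{1,4},{2,5},{3,6}} of {1,...,6} (each block pairing positions i and i+3) is s-balanced but not locally s-balanced. -/
import Mathlib


/-- A finite collection `Q` of blocks inside `Fin m`, whose retained points
(the union of the blocks) are relabeled consecutively `1,2,…` in increasing
order, is `s`-balanced if its total number of legs is even and in each block
the number of odd new labels is congruent to the number of even new labels
modulo `s`.  The new label of `x` is odd iff the number of retained points
below `x` is even. -/
def SBalancedRel {m : ℕ} (s : ℕ) (Q : Finset (Finset (Fin m))) : Prop :=
  Even (∑ B ∈ Q, B.card) ∧
  ∀ B ∈ Q,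
    (B.filter (fun x => ((Q.sup id).filter (· < x)).card % 2 = 0)).card
      ≡ (B.filter (fun x => ((Q.sup id).filter (· < x)).card % 2 = 1)).card [MOD s]

/-- A partition is locally `s`-balanced if every subpartition formed by a
subset of its blocks, relabeled consecutively, is `s`-balanced. -/
def LocallySBalanced {m : ℕ} (s : ℕ) (P : Finset (Finset (Fin m))) : Prop :=
  ∀ Q ⊆ P, SBalancedRel s Q

/-- The partition `{{1,4},{2,5},{3,6}}` of `{1,…,6}` (encoded on `Fin 6` as
`{{0,3},{1,4},{2,5}}`) is `s`-balanced but not locally `s`-balanced, for any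
`s ≥ 3`. -/
theorem half_commutation_partition_balanced_not_locally (s : ℕ) (hs : 3 ≤ s) :
    SBalancedRel s ({{0, 3}, {1, 4}, {2, 5}} : Finset (Finset (Fin 6))) ∧
    ¬ LocallySBalanced s ({{0, 3}, {1, 4}, {2, 5}} : Finset (Finset (Fin 6))) := by
  constructor
  · constructor
    · decide
    · intro B hB
      fin_cases hB <;>
      · refine Nat.ModEq.symm ?_
        have : ∀ a b : ℕ, a = b → a ≡ b [MOD s] := fun a b h => h ▸ Nat.ModEq.refl a
        apply this
        decide
  · intro h
    have hsub : ({{0, 3}, {1, 4}} : Finset (Finset (Fin 6))) ⊆ {{0, 3}, {1, 4}, {2, 5}} := by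
      decide
    have h2 := (h _ hsub).2 {0, 3} (by decide)
    have hc1 : (({0,3} : Finset (Fin 6)).filter (fun x => ((({{0, 3}, {1, 4}} : Finset (Finset (Fin 6))).sup id).filter (· < x)).card % 2 = 0)).card = 2 := by decide
    have hc2 : (({0,3} : Finset (Fin 6)).filter (fun x => ((({{0, 3}, {1, 4}} : Finset (Finset (Fin 6))).sup id).filter (· < x)).card % 2 = 1)).card = 0 := by decide
    rw [hc1, hc2] at h2
    have : (2 : ℕ) % s = 0 := by simpa [Nat.ModEq] using h2
    rw [Nat.mod_eq_of_lt (by omega)] at this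
    omega
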